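/- arXiv:2503.00651 — 3 statements merged into one kernel-verified Lean document; each statement's English description precedes it below -/
import Mathlib

section
/- There exists a positive real constant d₂ such that (2·log(R + √(R²−1))/R) / √(E(R)·|log E(R)|) → d₂ as R → ∞. In particular, the scale-invariant height 2·arcosh(R)/R of the catenoid in the cylinder of radius R behaves like √(E·|log E|), where E = E(R) is the excess. -/
open MeasureTheory Filter

/-- The scale-invariant cylindrical tilt-excess of the 2-dimensional catenoid
`{(x,y,z) : √(x²+y²) = cosh z}` in the cylinder of radius `R`, relative to the
horizontal plane `{z = 0}`. -/
noncomputable def catExcess (R : ℝ) : ℝ :=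
  (4 / (Real.pi * R ^ 2)) *
    ∫ ρ in (1:ℝ)..R, ρ * (2 - 2 * Real.sqrt (ρ ^ 2 - 1) / ρ) * (ρ / Real.sqrt (ρ ^ 2 - 1))

open Set
lemma aux_sqrt_pos {x : ℝ} (hx : 1 < x) : 0 < Real.sqrt (x^2-1) := by
  apply Real.sqrt_pos.mpr; nlinarith

lemma aux_sq {x : ℝ} (hx : 1 ≤ x) : (Real.sqrt (x^2-1))^2 = x^2-1 := by
  rw [Real.sq_sqrt]; nlinarith

lemma aux_hasDerivAt {x : ℝ} (hx : 1 < x) :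
    HasDerivAt (fun ρ : ℝ => ρ * Real.sqrt (ρ^2-1) + Real.log (ρ + Real.sqrt (ρ^2-1)) - ρ^2 + 1)
      (2*x^2/Real.sqrt (x^2-1) - 2*x) x := by
  have hs := aux_sqrt_pos hx
  have hsq := aux_sq hx.le
  have hx0 : (0:ℝ) < x := by linarith
  have h1 : HasDerivAt (fun ρ : ℝ => ρ^2 - 1) (2*x) x := by
    simpa using ((hasDerivAt_pow 2 x).sub_const 1)
  have hsqrt : HasDerivAt (fun ρ : ℝ => Real.sqrt (ρ^2-1)) (1/(2*Real.sqrt (x^2-1)) * (2*x)) x :=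
    (Real.hasDerivAt_sqrt (by nlinarith)).comp x h1
  have hprod : HasDerivAt (fun ρ : ℝ => ρ * Real.sqrt (ρ^2-1))
      (1 * Real.sqrt (x^2-1) + x * (1/(2*Real.sqrt (x^2-1)) * (2*x))) x :=
    (hasDerivAt_id x).mul hsqrt
  have hadd : HasDerivAt (fun ρ : ℝ => ρ + Real.sqrt (ρ^2-1))
      (1 + 1/(2*Real.sqrt (x^2-1)) * (2*x)) x := (hasDerivAt_id x).add hsqrt
  have hne : x + Real.sqrt (x^2-1) ≠ 0 := by positivity
  have hlog : HasDerivAt (fun ρ : ℝ => Real.log (ρ + Real.sqrt (ρ^2-1)))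
      ((1 + 1/(2*Real.sqrt (x^2-1)) * (2*x)) / (x + Real.sqrt (x^2-1))) x := by
    exact hadd.log hne
  have := ((hprod.add hlog).sub ((hasDerivAt_pow 2 x : HasDerivAt (fun ρ : ℝ => ρ^2) (((2:ℕ):ℝ) * x^(2-1)) x))).add_const 1
  have h2 : HasDerivAt (fun ρ : ℝ => ρ * Real.sqrt (ρ^2-1) + Real.log (ρ + Real.sqrt (ρ^2-1)) - ρ^2 + 1) _ x := this
  convert h2 using 1
  set s := Real.sqrt (x^2-1) with hsdef
  have hsne : s ≠ 0 := ne_of_gt hs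
  field_simp
  ring_nf
  linear_combination (-s - x) * hsq

lemma aux_intervalIntegrable {R : ℝ} (hR : 1 < R) :
    IntervalIntegrable (fun ρ : ℝ => 2*ρ^2/Real.sqrt (ρ^2-1) - 2*ρ) volume 1 R := by
  have hbig : IntervalIntegrable (fun ρ : ℝ => 2*R^2 * (ρ-1)^(-(1/2):ℝ) + 2*R) volume 1 R := by
    have h1 : IntervalIntegrable (fun x : ℝ => x ^ (-(1/2):ℝ)) volume 0 (R-1) :=
      intervalIntegral.intervalIntegrable_rpow' (by norm_num)
    have h2 := h1.comp_sub_right 1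
    norm_num at h2
    exact ((h2.const_mul (2*R^2)).add (intervalIntegrable_const (c := 2*R)))
  apply hbig.mono_fun
  · apply Measurable.aestronglyMeasurable
    fun_prop
  · rw [Filter.EventuallyLE, ae_restrict_iff' measurableSet_uIoc]
    apply Filter.Eventually.of_forall
    intro x hx
    rw [Set.uIoc_of_le hR.le] at hx
    obtain ⟨hx1, hxR⟩ := hx
    have hs := aux_sqrt_pos hx1
    have hx0 : (0:ℝ) < x := by linarith
    have hle : Real.sqrt (x-1) ≤ Real.sqrt (x^2-1) := by
      apply Real.sqrt_le_sqrt; nlinarith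
    have hsp : (0:ℝ) < Real.sqrt (x-1) := Real.sqrt_pos.mpr (by linarith)
    have hrpow : (x-1)^(-(1/2):ℝ) = 1/Real.sqrt (x-1) := by
      rw [Real.rpow_neg (by linarith), Real.sqrt_eq_rpow]; norm_num
    have key : 2*x^2/Real.sqrt (x^2-1) ≤ 2*R^2/Real.sqrt (x-1) := by
      apply div_le_div₀ (by positivity) (by nlinarith) hsp hle
    simp only [Real.norm_eq_abs]
    have hb : (0:ℝ) ≤ 2*R^2*(x-1)^(-(1/2):ℝ)+2*R :=
      add_nonneg (mul_nonneg (by positivity) (Real.rpow_nonneg (by linarith) _)) (by linarith)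
    rw [abs_of_nonneg hb]
    calc |2*x^2/Real.sqrt (x^2-1) - 2*x| ≤ |2*x^2/Real.sqrt (x^2-1)| + |2*x| := abs_sub _ _
      _ = 2*x^2/Real.sqrt (x^2-1) + 2*x := by
          rw [abs_of_nonneg (by positivity), abs_of_nonneg (by positivity)]
      _ ≤ 2*R^2*(x-1)^(-(1/2):ℝ) + 2*R := by
          rw [hrpow, mul_one_div]; exact add_le_add key (by linarith)

lemma integral_value {R : ℝ} (hR : 1 < R) :
    (∫ ρ in (1:ℝ)..R, ρ * (2 - 2 * Real.sqrt (ρ ^ 2 - 1) / ρ) * (ρ / Real.sqrt (ρ ^ 2 - 1)))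
      = R * Real.sqrt (R^2-1) + Real.log (R + Real.sqrt (R^2-1)) - R^2 + 1 := by
  have hcongr : (∫ ρ in (1:ℝ)..R, ρ * (2 - 2 * Real.sqrt (ρ ^ 2 - 1) / ρ) * (ρ / Real.sqrt (ρ ^ 2 - 1)))
      = ∫ ρ in (1:ℝ)..R, (2*ρ^2/Real.sqrt (ρ^2-1) - 2*ρ) := by
    apply intervalIntegral.integral_congr_ae
    apply Filter.Eventually.of_forall
    intro x hx
    rw [Set.uIoc_of_le hR.le] at hx
    have hx1 : 1 < x := hx.1
    have hs := aux_sqrt_pos hx1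
    have hx0 : (0:ℝ) < x := by linarith
    field_simp
  rw [hcongr]
  have := intervalIntegral.integral_eq_sub_of_hasDeriv_right_of_le hR.le
    (f := fun ρ : ℝ => ρ * Real.sqrt (ρ^2-1) + Real.log (ρ + Real.sqrt (ρ^2-1)) - ρ^2 + 1)
    (f' := fun ρ : ℝ => 2*ρ^2/Real.sqrt (ρ^2-1) - 2*ρ)
    ?_ ?_ (aux_intervalIntegrable hR)
  · rw [this]
    norm_num
  · apply ContinuousOn.add
    apply ContinuousOn.sub
    apply ContinuousOn.add
    · exact (continuousOn_id.mul ((Real.continuous_sqrt.comp (by continuity)).continuousOn))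
    · apply ContinuousOn.log
      · exact (continuousOn_id.add ((Real.continuous_sqrt.comp (by continuity)).continuousOn))
      · intro x hx
        have hx1 : (1:ℝ) ≤ x := hx.1
        have : (0:ℝ) ≤ Real.sqrt (x^2-1) := Real.sqrt_nonneg _
        intro h; nlinarith [this]
    · exact (continuous_pow 2).continuousOn
    · exact continuousOn_const
  · intro x hx
    exact (aux_hasDerivAt hx.1).hasDerivWithinAt

lemma catExcess_eq {R : ℝ} (hR : 1 < R) :
    catExcess R = 4 / (Real.pi * R^2) *
      (Real.log (R + Real.sqrt (R^2-1)) + (1 - R / (R + Real.sqrt (R^2-1)))) := by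
  rw [catExcess, integral_value hR]
  have hs := aux_sqrt_pos hR
  have hsq := aux_sq hR.le
  have hR0 : (0:ℝ) < R := by linarith
  have hne : R + Real.sqrt (R^2-1) ≠ 0 := by positivity
  have key : R * Real.sqrt (R^2-1) - R^2 + 1 = 1 - R / (R + Real.sqrt (R^2-1)) := by
    field_simp
    linear_combination R * hsq
  rw [show R * Real.sqrt (R^2-1) + Real.log (R + Real.sqrt (R^2-1)) - R^2 + 1
      = Real.log (R + Real.sqrt (R^2-1)) + (R * Real.sqrt (R^2-1) - R^2 + 1) by ring, key]

lemma tendsto_quot : Tendsto (fun R : ℝ => Real.sqrt (R^2-1)/R) atTop (nhds 1) := by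
  have h0 : Tendsto (fun R : ℝ => (R^2)⁻¹) atTop (nhds 0) := by
    have hp : Tendsto (fun x : ℝ => x^2) atTop atTop := tendsto_pow_atTop two_ne_zero
    simpa [Pi.inv_def] using hp.inv_tendsto_atTop
  have hinv : Tendsto (fun R : ℝ => 1 - (R^2)⁻¹) atTop (nhds 1) := by
    simpa using tendsto_const_nhds.sub h0
  have hsq : Tendsto (fun R : ℝ => Real.sqrt (1 - (R^2)⁻¹)) atTop (nhds 1) := by
    have := (Real.continuous_sqrt.tendsto 1).comp hinv
    simpa [Function.comp_def] using this
  apply hsq.congr'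
  filter_upwards [eventually_ge_atTop (1:ℝ)] with R hR
  have hR0 : (0:ℝ) < R := by linarith
  rw [show (1 - (R^2)⁻¹) = (R^2-1)/R^2 by field_simp, Real.sqrt_div (by nlinarith), Real.sqrt_sq hR0.le]

lemma tendsto_one_add_quot : Tendsto (fun R : ℝ => 1 + Real.sqrt (R^2-1)/R) atTop (nhds 2) := by
  have h := tendsto_quot.const_add 1
  norm_num at h
  exact h

lemma tendsto_g : Tendsto (fun R : ℝ => 1 - R/(R + Real.sqrt (R^2-1))) atTop (nhds (1/2)) := by
  have h2 : Tendsto (fun R : ℝ => 1 - (1 + Real.sqrt (R^2-1)/R)⁻¹) atTop (nhds (1/2)) := by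
    have := (tendsto_one_add_quot.inv₀ (by norm_num)).const_sub 1
    norm_num at this
    exact this
  apply h2.congr'
  filter_upwards [eventually_ge_atTop (2:ℝ)] with R hR
  have hR1 : (1:ℝ) < R := by linarith
  have hs := aux_sqrt_pos hR1
  have hR0 : (0:ℝ) < R := by linarith
  have hne : R + Real.sqrt (R^2-1) ≠ 0 := by positivity
  congr 1
  rw [inv_eq_one_div]
  field_simp

lemma tendsto_L_atTop : Tendsto (fun R : ℝ => Real.log (R + Real.sqrt (R^2-1))) atTop atTop := by
  apply tendsto_atTop_mono' atTop (f₁ := Real.log) _ Real.tendsto_log_atTop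
  filter_upwards [eventually_ge_atTop (1:ℝ)] with R hR
  exact Real.log_le_log (by linarith) (by nlinarith [Real.sqrt_nonneg (R^2-1)])

lemma tendsto_log_div_L : Tendsto (fun R : ℝ => Real.log R / Real.log (R + Real.sqrt (R^2-1)))
    atTop (nhds 1) := by
  have hu2 : Tendsto (fun R : ℝ => Real.log (1 + Real.sqrt (R^2-1)/R)) atTop (nhds (Real.log 2)) := by
    exact ((Real.continuousAt_log (by norm_num : (2:ℝ) ≠ 0)).tendsto).comp tendsto_one_add_quot
  have hL_div : Tendsto (fun R : ℝ => Real.log (R + Real.sqrt (R^2-1)) / Real.log R)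
      atTop (nhds 1) := by
    have h3 : Tendsto (fun R : ℝ => 1 + Real.log (1 + Real.sqrt (R^2-1)/R) / Real.log R)
        atTop (nhds 1) := by
      simpa using tendsto_const_nhds.add (hu2.div_atTop Real.tendsto_log_atTop)
    apply h3.congr'
    filter_upwards [eventually_ge_atTop (2:ℝ)] with R hR
    have hR1 : (1:ℝ) < R := by linarith
    have hs := aux_sqrt_pos hR1
    have hR0 : (0:ℝ) < R := by linarith
    have hlogR : Real.log R ≠ 0 := ne_of_gt (Real.log_pos hR1)
    have hfact : R + Real.sqrt (R^2-1) = R * (1 + Real.sqrt (R^2-1)/R) := by field_simp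
    rw [hfact, Real.log_mul (ne_of_gt hR0) (by positivity), add_div, div_self hlogR]
  have := hL_div.inv₀ one_ne_zero
  norm_num at this
  exact this

noncomputable def auxL (R : ℝ) : ℝ := Real.log (R + Real.sqrt (R^2-1))
noncomputable def auxG (R : ℝ) : ℝ := 1 - R/(R + Real.sqrt (R^2-1))

lemma haux_L : Tendsto auxL atTop atTop := tendsto_L_atTop
lemma haux_G : Tendsto auxG atTop (nhds (1/2)) := tendsto_g
lemma haux_logdiv : Tendsto (fun R => Real.log R / auxL R) atTop (nhds 1) := tendsto_log_div_L

lemma haux_LgL : Tendsto (fun R => (auxL R + auxG R)/auxL R) atTop (nhds 1) := by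
  have hgL : Tendsto (fun R => auxG R / auxL R) atTop (nhds 0) := haux_G.div_atTop haux_L
  have h1 : Tendsto (fun R => 1 + auxG R / auxL R) atTop (nhds 1) := by
    simpa using tendsto_const_nhds.add hgL
  apply h1.congr'
  filter_upwards [haux_L.eventually_ge_atTop 1] with R hR
  have hLne : auxL R ≠ 0 := by intro h; rw [h] at hR; linarith
  rw [add_div, div_self hLne]

lemma haux_A : Tendsto (fun R => auxL R/(auxL R + auxG R)) atTop (nhds 1) := by
  simpa [inv_div] using haux_LgL.inv₀ one_ne_zero

lemma haux_Lg_top : Tendsto (fun R => auxL R + auxG R) atTop atTop := by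
  apply tendsto_atTop_mono' atTop _ haux_L
  filter_upwards [haux_G.eventually_const_lt (by norm_num : (0:ℝ) < 1/2)] with R hR
  linarith

lemma haux_logLg : Tendsto (fun R => Real.log (auxL R + auxG R)/auxL R) atTop (nhds 0) := by
  have hy : Tendsto (fun y : ℝ => Real.log y / y) atTop (nhds 0) := by
    simpa using Real.isLittleO_log_id_atTop.tendsto_div_nhds_zero
  have hll : Tendsto (fun R => Real.log (auxL R + auxG R)/(auxL R + auxG R)) atTop (nhds 0) :=
    hy.comp haux_Lg_top
  have h4 : Tendsto (fun R =>
      (Real.log (auxL R + auxG R)/(auxL R + auxG R)) * ((auxL R + auxG R)/auxL R))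
      atTop (nhds 0) := by
    simpa using hll.mul haux_LgL
  apply h4.congr'
  filter_upwards [haux_L.eventually_ge_atTop 1, haux_Lg_top.eventually_ge_atTop 1] with R h1 h2
  have hLne : auxL R ≠ 0 := by intro h; rw [h] at h1; linarith
  have hLgne : auxL R + auxG R ≠ 0 := by intro h; rw [h] at h2; linarith
  field_simp

lemma haux_E : ∀ᶠ R in atTop, catExcess R = 4/(Real.pi * R^2) * (auxL R + auxG R) := by
  filter_upwards [eventually_gt_atTop (1:ℝ)] with R hR
  exact catExcess_eq hR

lemma haux_logE : ∀ᶠ R in atTop, -Real.log (catExcess R)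
    = 2*Real.log R - Real.log 4 + Real.log Real.pi - Real.log (auxL R + auxG R) := by
  filter_upwards [haux_E, haux_L.eventually_ge_atTop 1,
    haux_G.eventually_const_lt (by norm_num : (0:ℝ) < 1/2), eventually_gt_atTop (1:ℝ)]
    with R hER hL1 hg0 hR1
  have hR0 : (0:ℝ) < R := by linarith
  have hpi := Real.pi_pos
  have hLg : (0:ℝ) < auxL R + auxG R := by linarith
  rw [hER, Real.log_mul (by positivity) (ne_of_gt hLg),
    Real.log_div (by norm_num) (by positivity), Real.log_mul (ne_of_gt hpi) (by positivity),
    Real.log_pow]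
  push_cast
  ring

lemma haux_Div : Tendsto (fun R => -Real.log (catExcess R) / auxL R) atTop (nhds 2) := by
  have c1 : Tendsto (fun R => 2*(Real.log R / auxL R)) atTop (nhds 2) := by
    simpa using haux_logdiv.const_mul 2
  have c2 : Tendsto (fun R : ℝ => Real.log 4 / auxL R) atTop (nhds 0) :=
    tendsto_const_nhds.div_atTop haux_L
  have c3 : Tendsto (fun R : ℝ => Real.log Real.pi / auxL R) atTop (nhds 0) :=
    tendsto_const_nhds.div_atTop haux_L
  have h5 : Tendsto (fun R => 2*(Real.log R / auxL R) - Real.log 4 / auxL R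
      + Real.log Real.pi / auxL R - Real.log (auxL R + auxG R)/auxL R) atTop (nhds 2) := by
    simpa using ((c1.sub c2).add c3).sub haux_logLg
  apply h5.congr'
  filter_upwards [haux_logE] with R hR
  rw [hR]
  ring

lemma haux_neg_top : Tendsto (fun R => -Real.log (catExcess R)) atTop atTop := by
  have h := Filter.Tendsto.pos_mul_atTop (by norm_num : (0:ℝ) < 2) haux_Div haux_L
  apply h.congr'
  filter_upwards [haux_L.eventually_ge_atTop 1] with R h1
  have hLne : auxL R ≠ 0 := by intro h; rw [h] at h1; linarith
  exact div_mul_cancel₀ _ hLne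

lemma haux_B : Tendsto (fun R => auxL R / (-Real.log (catExcess R))) atTop (nhds (1/2)) := by
  have := haux_Div.inv₀ two_ne_zero
  norm_num [inv_div] at this
  exact this

/-- There is a positive constant `d₂` such that the scale-invariant height
`2·arcosh(R)/R = 2·log(R+√(R²−1))/R` of the catenoid divided by `√(E(R)·|log E(R)|)`
tends to `d₂` as `R → ∞`. -/
theorem catenoid_height_asymptotics :
    ∃ d₂ : ℝ, 0 < d₂ ∧
      Tendsto
        (fun R : ℝ =>
          (2 * Real.log (R + Real.sqrt (R ^ 2 - 1)) / R) /
            Real.sqrt (catExcess R * |Real.log (catExcess R)|))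
        atTop (nhds d₂) := by
  have hpi := Real.pi_pos
  refine ⟨Real.sqrt (Real.pi/2), Real.sqrt_pos.mpr (by positivity), ?_⟩
  have hinner : Tendsto (fun R => Real.pi * (auxL R/(auxL R + auxG R))
      * (auxL R/(-Real.log (catExcess R)))) atTop (nhds (Real.pi/2)) := by
    have h := ((tendsto_const_nhds : Tendsto (fun _ : ℝ => Real.pi) atTop (nhds Real.pi)).mul haux_A).mul haux_B
    rw [show Real.pi * 1 * (1/2) = Real.pi / 2 by ring] at h
    exact h
  have hsqrt_t : Tendsto (fun R => Real.sqrt (Real.pi * (auxL R/(auxL R + auxG R))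
      * (auxL R/(-Real.log (catExcess R))))) atTop (nhds (Real.sqrt (Real.pi/2))) :=
    (Real.continuous_sqrt.tendsto _).comp hinner
  apply hsqrt_t.congr'
  filter_upwards [haux_E, haux_L.eventually_ge_atTop 1,
    haux_G.eventually_const_lt (by norm_num : (0:ℝ) < 1/2), eventually_gt_atTop (1:ℝ),
    haux_neg_top.eventually_gt_atTop 0] with R hER hL1 hg0 hR1 hml
  have hR0 : (0:ℝ) < R := by linarith
  have hLpos : (0:ℝ) < auxL R := by linarith
  have hLg : (0:ℝ) < auxL R + auxG R := by linarith
  have hlneg : Real.log (catExcess R) < 0 := by linarith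
  have habs : |Real.log (catExcess R)| = -Real.log (catExcess R) := abs_of_neg hlneg
  rw [habs]
  set m := -Real.log (catExcess R) with hmdef
  have hmne : m ≠ 0 := by positivity
  have hinner_eq : Real.pi * (auxL R/(auxL R + auxG R)) * (auxL R/m)
      = (2 * auxL R / R)^2 / (catExcess R * m) := by
    rw [hER]
    field_simp
    ring
  rw [hinner_eq, Real.sqrt_div (sq_nonneg _),
    Real.sqrt_sq (div_nonneg (by linarith) hR0.le : (0:ℝ) ≤ 2*auxL R/R)]
  rfl
end

section
/- For each fixed β ∈ (0, 1/2) and p > 2 there exists a positive real constant d₄ such that ( (4/(π R²)) · ∫_{R_β(R)}^{R} ρ·(ρ²−1)^{−p/2}·(ρ/√(ρ²−1)) dρ )^{1/p} / ( R^{−2(1+β(p−2))/p} · (log R)^{β(p−2)/p} ) → d₄ as R → ∞. In particular this Lᵖ gradient quantity of the truncated graphical part of the catenoid grows faster than E(R)^{1/2}. -/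
open MeasureTheory Filter

/-- The radius `R_β(R)`, determined by `1/√(R_β² − 1) = E(R)^β`,
i.e. `R_β = √(1 + E(R)^(−2β))`. -/
noncomputable def Rbeta (β R : ℝ) : ℝ :=
  Real.sqrt (1 + catExcess R ^ (-(2 * β)))

section CatenoidAux
open Real Topology intervalIntegral

noncomputable def gfun (ρ : ℝ) : ℝ :=
  ρ * (2 - 2 * Real.sqrt (ρ ^ 2 - 1) / ρ) * (ρ / Real.sqrt (ρ ^ 2 - 1))

noncomputable def Ffun (x : ℝ) : ℝ :=
  x * Real.sqrt (x ^ 2 - 1) - x ^ 2 + Real.log (x + Real.sqrt (x ^ 2 - 1))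

lemma sq_sub_one_pos {x : ℝ} (hx : 1 < x) : 0 < x ^ 2 - 1 := by nlinarith

lemma sqrt_sq_sub_one_pos {x : ℝ} (hx : 1 < x) : 0 < Real.sqrt (x ^ 2 - 1) :=
  Real.sqrt_pos.2 (sq_sub_one_pos hx)

lemma sqrt_sq_sub_one_lt {x : ℝ} (hx : 1 < x) : Real.sqrt (x ^ 2 - 1) < x := by
  have h : Real.sqrt (x ^ 2 - 1) < Real.sqrt (x ^ 2) :=
    Real.sqrt_lt_sqrt (by nlinarith) (by nlinarith)
  rwa [Real.sqrt_sq (by linarith : (0:ℝ) ≤ x)] at h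

lemma hasDerivAt_Ffun {x : ℝ} (hx : 1 < x) : HasDerivAt Ffun (gfun x) x := by
  have hx0 : (0:ℝ) < x := by linarith
  have hs : 0 < Real.sqrt (x ^ 2 - 1) := sqrt_sq_sub_one_pos hx
  have hsq : Real.sqrt (x ^ 2 - 1) ^ 2 = x ^ 2 - 1 := Real.sq_sqrt (sq_sub_one_pos hx).le
  set s := Real.sqrt (x ^ 2 - 1) with hs_def
  have hxs : x + s ≠ 0 := by positivity
  have hinner : HasDerivAt (fun y : ℝ => y ^ 2 - 1) (2 * x) x := by
    simpa using ((hasDerivAt_pow 2 x).sub_const 1)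
  have hsder : HasDerivAt (fun y : ℝ => Real.sqrt (y ^ 2 - 1)) (x / s) x := by
    have := (Real.hasDerivAt_sqrt (ne_of_gt (sq_sub_one_pos hx))).comp x hinner
    refine this.congr_deriv ?_
    rw [← hs_def]
    field_simp
  have h1 : HasDerivAt (fun y : ℝ => y * Real.sqrt (y ^ 2 - 1)) (s + x * (x / s)) x := by
    have := (hasDerivAt_id x).mul hsder
    refine this.congr_deriv ?_
    simp [hs_def]
  have h2 : HasDerivAt (fun y : ℝ => y ^ 2) (2 * x) x := by simpa using hasDerivAt_pow 2 x
  have h3 : HasDerivAt (fun y : ℝ => Real.log (y + Real.sqrt (y ^ 2 - 1)))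
      ((1 + x / s) / (x + s)) x := by
    have := (Real.hasDerivAt_log hxs).comp x ((hasDerivAt_id x).add hsder)
    exact this.congr_deriv (by ring)
  have := (h1.sub h2).add h3
  refine this.congr_deriv ?_
  symm
  unfold gfun
  rw [← hs_def]
  have h4 : (1 + x / s) / (x + s) = 1 / s := by
    rw [div_eq_div_iff hxs (ne_of_gt hs)]
    field_simp
    ring
  rw [h4]
  field_simp
  nlinarith [hsq]

lemma gfun_contOn {a b : ℝ} (ha : 1 < a) : ContinuousOn gfun (Set.Icc a b) := by
  have hsub : ∀ x ∈ Set.Icc a b, x ≠ 0 ∧ Real.sqrt (x ^ 2 - 1) ≠ 0 := by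
    intro x hx
    have h1 : 1 < x := lt_of_lt_of_le ha hx.1
    exact ⟨by linarith, ne_of_gt (Real.sqrt_pos.2 (by nlinarith))⟩
  have hs : ContinuousOn (fun x : ℝ => Real.sqrt (x ^ 2 - 1)) (Set.Icc a b) :=
    (Real.continuous_sqrt.comp (by continuity)).continuousOn
  exact ((continuousOn_id.mul ((continuousOn_const.sub ((continuousOn_const.mul hs).div
    continuousOn_id (fun x hx => (hsub x hx).1))))).mul
    (continuousOn_id.div hs (fun x hx => (hsub x hx).2)))

lemma gfun_intble {a b : ℝ} (ha : 1 < a) (hab : a ≤ b) :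
    IntervalIntegrable gfun volume a b := by
  apply ContinuousOn.intervalIntegrable
  rw [Set.uIcc_of_le hab]
  exact gfun_contOn ha

lemma gfun_intble_one_two : IntervalIntegrable gfun volume 1 2 := by
  have hmaj : IntervalIntegrable (fun ρ : ℝ => 8 * (ρ - 1) ^ (-(1/2) : ℝ)) volume 1 2 := by
    have h : IntervalIntegrable (fun x : ℝ => x ^ (-(1/2) : ℝ)) volume 0 1 :=
      intervalIntegral.intervalIntegrable_rpow' (by norm_num)
    have h2 := h.comp_sub_right 1
    norm_num at h2
    exact h2.const_mul 8
  apply hmaj.mono_fun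
  · apply Measurable.aestronglyMeasurable
    unfold gfun
    fun_prop
  · filter_upwards [ae_restrict_mem measurableSet_Ioc] with ρ hρ
    rw [Set.uIoc_of_le (by norm_num)] at hρ
    obtain ⟨h1, h2⟩ := hρ
    have hρ0 : (0:ℝ) < ρ := by linarith
    have hs2 : 0 < ρ ^ 2 - 1 := by nlinarith
    have hs : 0 < Real.sqrt (ρ ^ 2 - 1) := Real.sqrt_pos.2 hs2
    have hsq : Real.sqrt (ρ ^ 2 - 1) ^ 2 = ρ ^ 2 - 1 := Real.sq_sqrt hs2.le
    have hsle : Real.sqrt (ρ ^ 2 - 1) ≤ ρ := by nlinarith [hsq, hs]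
    have hlow : Real.sqrt (ρ - 1) ≤ Real.sqrt (ρ ^ 2 - 1) :=
      Real.sqrt_le_sqrt (by nlinarith)
    have hr1 : 0 < ρ - 1 := by linarith
    have hsr : 0 < Real.sqrt (ρ - 1) := Real.sqrt_pos.2 hr1
    have hgeq : gfun ρ = (2 * ρ - 2 * Real.sqrt (ρ ^ 2 - 1)) * ρ / Real.sqrt (ρ ^ 2 - 1) := by
      unfold gfun
      field_simp
    have hb : gfun ρ ≤ 8 / Real.sqrt (ρ - 1) := by
      rw [hgeq, div_le_div_iff₀ hs hsr]
      have h8 : (2 * ρ - 2 * Real.sqrt (ρ ^ 2 - 1)) * ρ ≤ 8 := by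
        nlinarith [mul_nonneg hs.le hρ0.le]
      exact mul_le_mul h8 hlow hsr.le (by norm_num)
    have hbpos : 0 ≤ gfun ρ := by
      rw [hgeq]
      apply div_nonneg _ hs.le
      nlinarith
    have hrw : (8:ℝ) * (ρ - 1) ^ (-(1/2) : ℝ) = 8 / Real.sqrt (ρ - 1) := by
      rw [Real.rpow_neg hr1.le, ← Real.sqrt_eq_rpow]
      ring
    rw [Real.norm_eq_abs, Real.norm_eq_abs, abs_of_nonneg hbpos, hrw,
      abs_of_nonneg (by positivity)]
    exact hb

noncomputable def cc2 : ℝ := (∫ ρ in (1:ℝ)..2, gfun ρ) - Ffun 2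


lemma excess_eq {R : ℝ} (hR : 2 ≤ R) :
    catExcess R = 4 / (Real.pi * R ^ 2) * (cc2 + Ffun R) := by
  have hsplit : (∫ ρ in (1:ℝ)..R, gfun ρ) = (∫ ρ in (1:ℝ)..2, gfun ρ) + ∫ ρ in (2:ℝ)..R, gfun ρ :=
    (intervalIntegral.integral_add_adjacent_intervals gfun_intble_one_two
      (gfun_intble one_lt_two hR)).symm
  have hftc : (∫ ρ in (2:ℝ)..R, gfun ρ) = Ffun R - Ffun 2 := by
    apply intervalIntegral.integral_eq_sub_of_hasDerivAt
    · intro x hx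
      rw [Set.uIcc_of_le hR] at hx
      exact hasDerivAt_Ffun (by linarith [hx.1])
    · exact gfun_intble one_lt_two hR
  have : catExcess R = 4 / (Real.pi * R ^ 2) * ∫ ρ in (1:ℝ)..R, gfun ρ := rfl
  rw [this, hsplit, hftc]
  unfold cc2
  ring

lemma excess_tendsto :
    Tendsto (fun R => catExcess R * R ^ 2 / Real.log R) atTop (𝓝 (4 / Real.pi)) := by
  have hkey : Tendsto (fun R => (cc2 + Ffun R) / Real.log R) atTop (𝓝 1) := by
    have hlo : Tendsto (fun R : ℝ => (cc2 - 1) / Real.log R + 1) atTop (𝓝 1) := by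
      have := (tendsto_const_nhds (x := cc2 - 1)).div_atTop Real.tendsto_log_atTop
      simpa using this.add (tendsto_const_nhds (x := (1:ℝ)))
    have hhi : Tendsto (fun R : ℝ => (cc2 + Real.log 2) / Real.log R + 1) atTop (𝓝 1) := by
      have := (tendsto_const_nhds (x := cc2 + Real.log 2)).div_atTop Real.tendsto_log_atTop
      simpa using this.add (tendsto_const_nhds (x := (1:ℝ)))
    apply tendsto_of_tendsto_of_tendsto_of_le_of_le' hlo hhi
    · filter_upwards [eventually_ge_atTop (2:ℝ),
        Real.tendsto_log_atTop.eventually_gt_atTop 0] with R hR hlog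
      have h1 : (1:ℝ) < R := by linarith
      have hs : 0 < Real.sqrt (R ^ 2 - 1) := sqrt_sq_sub_one_pos h1
      have hsq : Real.sqrt (R ^ 2 - 1) ^ 2 = R ^ 2 - 1 := Real.sq_sqrt (by nlinarith)
      have hF : Real.log R - 1 ≤ Ffun R := by
        unfold Ffun
        have h2 : -1 ≤ R * Real.sqrt (R ^ 2 - 1) - R ^ 2 := by nlinarith [hsq, hs]
        have h3 : Real.log R ≤ Real.log (R + Real.sqrt (R ^ 2 - 1)) :=
          Real.log_le_log (by linarith) (by linarith)
        linarith
      rw [div_add' _ _ _ (ne_of_gt hlog), div_le_div_iff_of_pos_right hlog]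
      linarith
    · filter_upwards [eventually_ge_atTop (2:ℝ),
        Real.tendsto_log_atTop.eventually_gt_atTop 0] with R hR hlog
      have h1 : (1:ℝ) < R := by linarith
      have hs : 0 < Real.sqrt (R ^ 2 - 1) := sqrt_sq_sub_one_pos h1
      have hslt : Real.sqrt (R ^ 2 - 1) < R := sqrt_sq_sub_one_lt h1
      have hF : Ffun R ≤ Real.log R + Real.log 2 := by
        unfold Ffun
        have h2 : R * Real.sqrt (R ^ 2 - 1) - R ^ 2 ≤ 0 := by nlinarith
        have h3 : Real.log (R + Real.sqrt (R ^ 2 - 1)) ≤ Real.log R + Real.log 2 := by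
          rw [← Real.log_mul (by linarith) (by norm_num)]
          exact Real.log_le_log (by linarith) (by linarith)
        linarith
      rw [div_add' _ _ _ (ne_of_gt hlog), div_le_div_iff_of_pos_right hlog]
      linarith
  have heq : ∀ᶠ R in atTop, 4 / Real.pi * ((cc2 + Ffun R) / Real.log R)
      = catExcess R * R ^ 2 / Real.log R := by
    filter_upwards [eventually_ge_atTop (2:ℝ)] with R hR
    rw [excess_eq hR]
    have hR0 : R ≠ 0 := by linarith
    symm
    calc 4 / (Real.pi * R ^ 2) * (cc2 + Ffun R) * R ^ 2 / Real.log R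
        = 4 / Real.pi * ((cc2 + Ffun R) / Real.log R) * (R ^ 2 / R ^ 2) := by ring
      _ = 4 / Real.pi * ((cc2 + Ffun R) / Real.log R) := by
          rw [div_self (pow_ne_zero 2 hR0), mul_one]
  have := (hkey.const_mul (4 / Real.pi)).congr' heq
  simpa using this

lemma rpow_rpow {x : ℝ} (hx : 0 ≤ x) (a b : ℝ) : (x ^ a) ^ b = x ^ (a * b) :=
  (Real.rpow_mul hx a b).symm

lemma rpow_two' {x : ℝ} (hx : 0 ≤ x) : x ^ (2:ℝ) = x ^ 2 := by
  rw [show (2:ℝ) = ((2:ℕ):ℝ) by norm_num, Real.rpow_natCast]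

/-- pointwise formula for the integrand -/
lemma f_eq {p ρ : ℝ} (hρ : 1 < ρ) :
    ρ * (ρ ^ 2 - 1) ^ (-p / 2) * (ρ / Real.sqrt (ρ ^ 2 - 1))
      = ρ ^ ((1:ℝ) - p) * (1 - ρ ^ (-(2:ℝ))) ^ (-((p+1)/2)) := by
  have hρ0 : (0:ℝ) < ρ := by linarith
  have hs2 : 0 < ρ ^ 2 - 1 := by nlinarith
  have hq : 0 < 1 - ρ ^ (-(2:ℝ)) := by
    rw [Real.rpow_neg hρ0.le, rpow_two' hρ0.le]
    have : (ρ ^ 2)⁻¹ < 1 := by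
      rw [inv_lt_one_iff₀]
      right; nlinarith
    linarith
  have h1 : ρ / Real.sqrt (ρ ^ 2 - 1) = ρ * (ρ ^ 2 - 1) ^ (-(1/2) : ℝ) := by
    rw [Real.sqrt_eq_rpow, div_eq_mul_inv, ← Real.rpow_neg hs2.le]
  rw [h1]
  have h2 : (ρ ^ 2 - 1) ^ (-p / 2) * (ρ ^ 2 - 1) ^ (-(1/2) : ℝ)
      = (ρ ^ 2 - 1) ^ (-((p+1)/2)) := by
    rw [← Real.rpow_add hs2]
    ring_nf
  have h3 : ρ ^ 2 - 1 = ρ ^ (2:ℝ) * (1 - ρ ^ (-(2:ℝ))) := by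
    rw [Real.rpow_neg hρ0.le, rpow_two' hρ0.le]
    field_simp
  have h4 : (ρ ^ 2 - 1) ^ (-((p+1)/2))
      = ρ ^ (2 * (-((p+1)/2))) * (1 - ρ ^ (-(2:ℝ))) ^ (-((p+1)/2)) := by
    rw [h3, Real.mul_rpow (by positivity) hq.le, rpow_rpow hρ0.le]
  calc ρ * (ρ ^ 2 - 1) ^ (-p / 2) * (ρ * (ρ ^ 2 - 1) ^ (-(1/2):ℝ))
      = ρ ^ 2 * ((ρ ^ 2 - 1) ^ (-p / 2) * (ρ ^ 2 - 1) ^ (-(1/2):ℝ)) := by ring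
    _ = ρ ^ 2 * (ρ ^ (2 * (-((p+1)/2))) * (1 - ρ ^ (-(2:ℝ))) ^ (-((p+1)/2))) := by
        rw [h2, h4]
    _ = (ρ ^ (2:ℝ) * ρ ^ (2 * (-((p+1)/2)))) * (1 - ρ ^ (-(2:ℝ))) ^ (-((p+1)/2)) := by
        rw [rpow_two' hρ0.le]; ring
    _ = ρ ^ ((1:ℝ) - p) * (1 - ρ ^ (-(2:ℝ))) ^ (-((p+1)/2)) := by
        rw [← Real.rpow_add hρ0]
        ring_nf

lemma f_bounds {p a ρ : ℝ} (hp : 2 < p) (ha : 2 ≤ a) (h1 : a ≤ ρ) :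
    ρ ^ ((1:ℝ) - p) ≤ ρ * (ρ ^ 2 - 1) ^ (-p / 2) * (ρ / Real.sqrt (ρ ^ 2 - 1)) ∧
      ρ * (ρ ^ 2 - 1) ^ (-p / 2) * (ρ / Real.sqrt (ρ ^ 2 - 1))
        ≤ (1 - a ^ (-(2:ℝ))) ^ (-((p+1)/2)) * ρ ^ ((1:ℝ) - p) := by
  have hρ1 : (1:ℝ) < ρ := by linarith
  have hρ0 : (0:ℝ) < ρ := by linarith
  have ha0 : (0:ℝ) < a := by linarith
  have hexp : -((p+1)/2) ≤ 0 := by linarith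
  have hqa : 0 < 1 - a ^ (-(2:ℝ)) := by
    have h14 : a ^ (-(2:ℝ)) ≤ (2:ℝ) ^ (-(2:ℝ)) :=
      Real.rpow_le_rpow_of_nonpos (by norm_num) ha (by norm_num)
    have h2 : (2:ℝ) ^ (-(2:ℝ)) = 1/4 := by
      rw [Real.rpow_neg (by norm_num), rpow_two' (by norm_num : (0:ℝ) ≤ 2)]
      norm_num
    rw [h2] at h14
    linarith
  have hqρ : 0 < 1 - ρ ^ (-(2:ℝ)) := by
    have h14 : ρ ^ (-(2:ℝ)) ≤ (2:ℝ) ^ (-(2:ℝ)) :=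
      Real.rpow_le_rpow_of_nonpos (by norm_num) (by linarith) (by norm_num)
    have h2 : (2:ℝ) ^ (-(2:ℝ)) = 1/4 := by
      rw [Real.rpow_neg (by norm_num), rpow_two' (by norm_num : (0:ℝ) ≤ 2)]
      norm_num
    rw [h2] at h14
    linarith
  have hq_le_one : 1 - ρ ^ (-(2:ℝ)) ≤ 1 := by
    have : 0 ≤ ρ ^ (-(2:ℝ)) := Real.rpow_nonneg hρ0.le _
    linarith
  have hqaq : 1 - a ^ (-(2:ℝ)) ≤ 1 - ρ ^ (-(2:ℝ)) := by
    have := Real.rpow_le_rpow_of_nonpos ha0 h1 (by norm_num : -(2:ℝ) ≤ 0)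
    linarith
  rw [f_eq hρ1]
  constructor
  · have h1' : 1 ≤ (1 - ρ ^ (-(2:ℝ))) ^ (-((p+1)/2)) :=
      Real.one_le_rpow_of_pos_of_le_one_of_nonpos hqρ hq_le_one hexp
    nlinarith [Real.rpow_pos_of_pos hρ0 ((1:ℝ) - p)]
  · have h2' : (1 - ρ ^ (-(2:ℝ))) ^ (-((p+1)/2)) ≤ (1 - a ^ (-(2:ℝ))) ^ (-((p+1)/2)) :=
      Real.rpow_le_rpow_of_nonpos hqa hqaq hexp
    nlinarith [Real.rpow_pos_of_pos hρ0 ((1:ℝ) - p)]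

lemma f_contOn {p a b : ℝ} (ha : 1 < a) :
    ContinuousOn (fun ρ : ℝ => ρ * (ρ ^ 2 - 1) ^ (-p / 2) * (ρ / Real.sqrt (ρ ^ 2 - 1)))
      (Set.Icc a b) := by
  have hsub : ∀ x ∈ Set.Icc a b, (0:ℝ) < x ^ 2 - 1 := by
    intro x hx
    have := lt_of_lt_of_le ha hx.1
    nlinarith
  have hc1 : ContinuousOn (fun x : ℝ => x ^ 2 - 1) (Set.Icc a b) := by fun_prop
  refine ContinuousOn.mul (ContinuousOn.mul continuousOn_id ?_) (ContinuousOn.div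
    continuousOn_id ((Real.continuous_sqrt.comp (by continuity)).continuousOn) ?_)
  · exact hc1.rpow_const (fun x hx => Or.inl (ne_of_gt (hsub x hx)))
  · exact fun x hx => ne_of_gt (Real.sqrt_pos.2 (hsub x hx))

lemma pow_one_sub_contOn {p a b : ℝ} (ha : 0 < a) :
    ContinuousOn (fun ρ : ℝ => ρ ^ ((1:ℝ) - p)) (Set.Icc a b) :=
  continuousOn_id.rpow_const (fun x hx => Or.inl (ne_of_gt (lt_of_lt_of_le ha hx.1)))

/-- For each fixed `β ∈ (0,1/2)` and `p > 2` there is a positive constant `d₄` such that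
`((4/(πR²))·∫_{R_β}^R ρ·(ρ²−1)^{−p/2}·(ρ/√(ρ²−1)) dρ)^{1/p}` divided by
`R^{−2(1+β(p−2))/p}·(log R)^{β(p−2)/p}` tends to `d₄` as `R → ∞`. -/
theorem catenoid_Lp_gradient_asymptotics (β p : ℝ) (hβ : β ∈ Set.Ioo (0:ℝ) (1/2))
    (hp : 2 < p) :
    ∃ d₄ : ℝ, 0 < d₄ ∧
      Tendsto
        (fun R : ℝ =>
          ((4 / (Real.pi * R ^ 2)) *
              ∫ ρ in (Rbeta β R)..R,
                ρ * (ρ ^ 2 - 1) ^ (-p / 2) * (ρ / Real.sqrt (ρ ^ 2 - 1))) ^ (1 / p) /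
            (R ^ (-2 * (1 + β * (p - 2)) / p) * Real.log R ^ (β * (p - 2) / p)))
        atTop (nhds d₄) := by
  obtain ⟨hβ0, hβh⟩ := hβ
  have hπ : (0:ℝ) < Real.pi := Real.pi_pos
  have hp2 : (0:ℝ) < p - 2 := by linarith
  have hp0 : (0:ℝ) < p := by linarith
  set c := β * (p - 2) with hcdef
  have hc : 0 < c := mul_pos hβ0 hp2
  set L := 4 / (Real.pi * (p - 2)) * (4 / Real.pi) ^ c with hLdef
  have hL : 0 < L := by
    have := Real.rpow_pos_of_pos (by positivity : (0:ℝ) < 4/Real.pi) c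
    positivity
  refine ⟨L ^ (1/p), Real.rpow_pos_of_pos hL _, ?_⟩
  set e := catExcess with hedef
  have ht : Tendsto (fun R => e R * R ^ 2 / Real.log R) atTop (𝓝 (4/Real.pi)) := excess_tendsto
  have hlr2 : Tendsto (fun R : ℝ => Real.log R / R ^ 2) atTop (𝓝 0) := by
    have h := (isLittleO_log_rpow_atTop (by norm_num : (0:ℝ) < 2)).tendsto_div_nhds_zero
    apply h.congr'
    filter_upwards [eventually_gt_atTop (0:ℝ)] with R hR
    rw [rpow_two' hR.le]
  have he0 : Tendsto e atTop (𝓝 0) := by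
    have h := ht.mul hlr2
    rw [mul_zero] at h
    apply h.congr'
    filter_upwards [eventually_gt_atTop (1:ℝ)] with R hR
    have hl : 0 < Real.log R := Real.log_pos hR
    field_simp
  have hepos : ∀ᶠ R in atTop, 0 < e R := by
    filter_upwards [ht.eventually (eventually_gt_nhds (by positivity : (0:ℝ) < 4/Real.pi)),
      eventually_gt_atTop (1:ℝ)] with R h hR
    have hl : 0 < Real.log R := Real.log_pos hR
    have h2 : 0 < e R * R ^ 2 := by
      by_contra hcon
      push_neg at hcon
      have : e R * R ^ 2 / Real.log R ≤ 0 := div_nonpos_of_nonpos_of_nonneg hcon hl.le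
      linarith
    by_contra h3
    push_neg at h3
    nlinarith [sq_nonneg R]
  have hXtop : Tendsto (fun R => e R ^ (-(2 * β))) atTop atTop := by
    have hinv : Tendsto (fun R => (e R)⁻¹) atTop atTop :=
      Filter.Tendsto.inv_tendsto_nhdsGT_zero
        (tendsto_nhdsWithin_of_tendsto_nhds_of_eventually_within _ he0
          (hepos.mono fun R h => h))
    have h2 : Tendsto (fun R => (e R)⁻¹ ^ (2*β)) atTop atTop :=
      (tendsto_rpow_atTop (by positivity)).comp hinv
    apply h2.congr'
    filter_upwards [hepos] with R hR
    rw [Real.inv_rpow hR.le, ← Real.rpow_neg hR.le]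
  have hRbtop : Tendsto (fun R => Rbeta β R) atTop atTop := by
    have h1 : Tendsto (fun R => 1 + e R ^ (-(2*β))) atTop atTop :=
      tendsto_atTop_add_const_left _ 1 hXtop
    have h2 := (tendsto_rpow_atTop (by norm_num : (0:ℝ) < 1/2)).comp h1
    apply h2.congr
    intro R
    simp only [Function.comp_apply]
    rw [Rbeta, Real.sqrt_eq_rpow]
  have hRb2 : ∀ᶠ R in atTop, 2 ≤ Rbeta β R := hRbtop.eventually_ge_atTop 2
  have hlt : ∀ᶠ R in atTop, Rbeta β R < R := by
    filter_upwards [ht.eventually (eventually_gt_nhds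
        (by rw [one_lt_div hπ]; exact Real.pi_lt_d2.trans (by norm_num) : (1:ℝ) < 4/Real.pi)),
      hepos, he0.eventually (eventually_le_nhds (by norm_num : (0:ℝ) < 1)),
      Real.tendsto_log_atTop.eventually_ge_atTop 2, eventually_ge_atTop (2:ℝ)]
      with R h1 h2 h3 h4 h5
    have hl0 : 0 < Real.log R := by linarith
    have hR0 : (0:ℝ) < R := by linarith
    have he2 : Real.log R ≤ e R * R ^ 2 := by
      have := (one_lt_div hl0).mp h1
      linarith
    have hkey : e R ^ (-(2*β)) ≤ (e R)⁻¹ := by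
      have := Real.rpow_le_rpow_of_exponent_ge h2 h3 (by linarith : (-1:ℝ) ≤ -(2*β))
      rwa [Real.rpow_neg_one] at this
    have hinve : (e R)⁻¹ ≤ R ^ 2 / Real.log R := by
      rw [inv_le_iff_one_le_mul₀ h2, div_mul_eq_mul_div, le_div_iff₀ hl0]
      linarith
    have hR2l : R ^ 2 / Real.log R ≤ R ^ 2 / 2 :=
      div_le_div_of_nonneg_left (by positivity) (by norm_num) h4
    have hfin : 1 + e R ^ (-(2*β)) < R ^ 2 := by nlinarith
    rw [Rbeta, Real.sqrt_lt' hR0]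
    exact hfin
  have hMto1 : Tendsto (fun R => (1 - Rbeta β R ^ (-(2:ℝ))) ^ (-((p+1)/2))) atTop (𝓝 1) := by
    have h1 : Tendsto (fun R => Rbeta β R ^ (-(2:ℝ))) atTop (𝓝 0) :=
      (tendsto_rpow_neg_atTop (by norm_num : (0:ℝ) < 2)).comp hRbtop
    have h2 : Tendsto (fun R => 1 - Rbeta β R ^ (-(2:ℝ))) atTop (𝓝 1) := by
      simpa using (tendsto_const_nhds (x := (1:ℝ))).sub h1
    simpa using h2.rpow_const (Or.inl one_ne_zero)
  have hΦ : Tendsto (fun R => 4 / (Real.pi * (p-2)) *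
      ((e R * R ^ 2 / Real.log R) ^ c * (1 + e R ^ (2*β)) ^ ((2-p)/2)
        - R ^ ((2-p)*(1-2*β)) * Real.log R ^ (-c))) atTop (𝓝 L) := by
    have h1 : Tendsto (fun R => (e R * R ^ 2 / Real.log R) ^ c) atTop (𝓝 ((4/Real.pi) ^ c)) :=
      ht.rpow_const (Or.inl (by positivity))
    have h2 : Tendsto (fun R => (1 + e R ^ (2*β)) ^ ((2-p)/2)) atTop (𝓝 1) := by
      have h2a : Tendsto (fun R => e R ^ (2*β)) atTop (𝓝 0) := by
        have := he0.rpow_const (Or.inr (by positivity : (0:ℝ) ≤ 2*β))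
        rwa [Real.zero_rpow (by positivity : 2*β ≠ 0)] at this
      have h2b : Tendsto (fun R => 1 + e R ^ (2*β)) atTop (𝓝 1) := by
        simpa using (tendsto_const_nhds (x:=(1:ℝ))).add h2a
      simpa using h2b.rpow_const (Or.inl one_ne_zero)
    have h3 : Tendsto (fun R : ℝ => R ^ ((2-p)*(1-2*β))) atTop (𝓝 0) := by
      have hneg : ((2:ℝ)-p)*(1-2*β) < 0 := by nlinarith
      have := tendsto_rpow_neg_atTop (y := -((2-p)*(1-2*β))) (by linarith)
      simpa using this
    have h4 : Tendsto (fun R : ℝ => Real.log R ^ (-c)) atTop (𝓝 0) :=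
      (tendsto_rpow_neg_atTop hc).comp Real.tendsto_log_atTop
    have hfin := ((h1.mul h2).sub (h3.mul h4)).const_mul (4/(Real.pi*(p-2)))
    rw [mul_one, mul_zero, sub_zero] at hfin
    exact hfin

  -- the lower comparison function and its limit
  have hHloΦ : ∀ᶠ R in atTop,
      4 / (Real.pi * (p-2)) *
        ((e R * R ^ 2 / Real.log R) ^ c * (1 + e R ^ (2*β)) ^ ((2-p)/2)
          - R ^ ((2-p)*(1-2*β)) * Real.log R ^ (-c))
      = 4 / (Real.pi * R ^ 2) * ((Rbeta β R ^ ((2:ℝ)-p) - R ^ ((2:ℝ)-p)) / (p-2))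
          / (R ^ (-2*(1+c)) * Real.log R ^ c) := by
    filter_upwards [hepos, Real.tendsto_log_atTop.eventually_ge_atTop 1,
      eventually_ge_atTop (2:ℝ)] with R hept hl1 hR2
    have hR0 : (0:ℝ) < R := by linarith
    have hl0 : 0 < Real.log R := by linarith
    set t := e R with htdef
    set l := Real.log R with hldef
    set v := (1 + t ^ (2*β)) ^ ((2-p)/2) with hvdef
    have hv0 : 0 < v := Real.rpow_pos_of_pos (by positivity) _
    have ha1 : Rbeta β R ^ ((2:ℝ)-p) = t ^ c * v := by
      rw [Rbeta, Real.sqrt_eq_rpow, rpow_rpow (by positivity)]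
      have hb : 1 + (catExcess R) ^ (-(2*β)) = t ^ (-(2*β)) * (1 + t ^ (2*β)) := by
        rw [mul_add, mul_one, ← Real.rpow_add hept]
        rw [show -(2*β) + 2*β = 0 by ring, Real.rpow_zero]
        ring
      rw [hb, Real.mul_rpow (by positivity) (by positivity), rpow_rpow hept.le]
      rw [show -(2*β) * (1/2 * (2-p)) = c by rw [hcdef]; ring,
        show (1:ℝ)/2 * (2-p) = (2-p)/2 by ring]
    have ha2 : (t * R ^ 2 / l) ^ c = t ^ c * R ^ (2*c) * l ^ (-c) := by
      rw [div_eq_mul_inv, Real.mul_rpow (by positivity) (by positivity),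
        Real.mul_rpow hept.le (by positivity), ← rpow_two' hR0.le, rpow_rpow hR0.le,
        Real.inv_rpow hl0.le, ← Real.rpow_neg hl0.le]
    have ha3 : R ^ ((2-p)*(1-2*β)) = R ^ ((2:ℝ)-p) * R ^ (2*c) := by
      rw [← Real.rpow_add hR0]
      congr 1
      rw [hcdef]; ring
    have ha4 : (R ^ (-2*(1+c)) * l ^ c)⁻¹ = R ^ (2:ℝ) * R ^ (2*c) * l ^ (-c) := by
      rw [mul_inv, ← Real.rpow_neg hR0.le, ← Real.rpow_neg hl0.le,
        show -(-2*(1+c)) = 2 + 2*c by ring, Real.rpow_add hR0]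
    rw [ha1, ha2, ha3, div_eq_mul_inv _ (R ^ (-2*(1+c)) * l ^ c), ha4, rpow_two' hR0.le]
    have hπ2 : Real.pi ≠ 0 := ne_of_gt hπ
    have hp2' : p - 2 ≠ 0 := ne_of_gt hp2
    have hR2' : R ^ 2 ≠ 0 := by positivity
    field_simp
  have hHlo : Tendsto (fun R => 4 / (Real.pi * R ^ 2) *
      ((Rbeta β R ^ ((2:ℝ)-p) - R ^ ((2:ℝ)-p)) / (p-2)) / (R ^ (-2*(1+c)) * Real.log R ^ c))
      atTop (𝓝 L) := hΦ.congr' hHloΦ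
  have hMH : Tendsto (fun R => (1 - Rbeta β R ^ (-(2:ℝ))) ^ (-((p+1)/2)) *
      (4 / (Real.pi * R ^ 2) * ((Rbeta β R ^ ((2:ℝ)-p) - R ^ ((2:ℝ)-p)) / (p-2))
        / (R ^ (-2*(1+c)) * Real.log R ^ c))) atTop (𝓝 L) := by
    have := hMto1.mul hHlo
    rwa [one_mul] at this
  -- the squeeze
  have hG : Tendsto (fun R => 4 / (Real.pi * R ^ 2) *
      (∫ ρ in (Rbeta β R)..R, ρ * (ρ ^ 2 - 1) ^ (-p / 2) * (ρ / Real.sqrt (ρ ^ 2 - 1)))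
      / (R ^ (-2*(1+c)) * Real.log R ^ c)) atTop (𝓝 L) := by
    apply tendsto_of_tendsto_of_tendsto_of_le_of_le' hHlo hMH
    · filter_upwards [hRb2, hlt, Real.tendsto_log_atTop.eventually_ge_atTop 1,
        eventually_ge_atTop (2:ℝ)] with R ha hab hl1 hR2
      have hR0 : (0:ℝ) < R := by linarith
      have hl0 : 0 < Real.log R := by linarith
      have hRb1 : (1:ℝ) < Rbeta β R := by linarith
      have hint_f : IntervalIntegrable
          (fun ρ : ℝ => ρ * (ρ ^ 2 - 1) ^ (-p / 2) * (ρ / Real.sqrt (ρ ^ 2 - 1)))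
          volume (Rbeta β R) R := by
        apply ContinuousOn.intervalIntegrable
        rw [Set.uIcc_of_le hab.le]
        exact f_contOn hRb1
      have hint_lo : IntervalIntegrable (fun ρ : ℝ => ρ ^ ((1:ℝ) - p))
          volume (Rbeta β R) R := by
        apply ContinuousOn.intervalIntegrable
        rw [Set.uIcc_of_le hab.le]
        exact pow_one_sub_contOn (by linarith)
      have hKle : (∫ ρ in (Rbeta β R)..R, ρ ^ ((1:ℝ) - p))
          ≤ ∫ ρ in (Rbeta β R)..R, ρ * (ρ ^ 2 - 1) ^ (-p / 2) * (ρ / Real.sqrt (ρ ^ 2 - 1)) :=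
        intervalIntegral.integral_mono_on hab.le hint_lo hint_f
          (fun x hx => (f_bounds hp ha hx.1).1)
      have hKval : (∫ ρ in (Rbeta β R)..R, ρ ^ ((1:ℝ) - p))
          = (Rbeta β R ^ ((2:ℝ)-p) - R ^ ((2:ℝ)-p)) / (p-2) := by
        rw [integral_rpow (Or.inr ⟨by linarith, by
          rw [Set.uIcc_of_le hab.le]
          intro hmem
          have := hmem.1
          linarith⟩)]
        rw [show (1:ℝ) - p + 1 = 2 - p by ring]
        rw [div_eq_div_iff (by linarith) (by linarith)]
        ring
      have hDD0 : 0 < R ^ (-2*(1+c)) * Real.log R ^ c :=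
        mul_pos (Real.rpow_pos_of_pos hR0 _) (Real.rpow_pos_of_pos hl0 _)
      rw [← hKval]
      have hcoef : 0 ≤ 4 / (Real.pi * R ^ 2) := by positivity
      exact div_le_div_of_nonneg_right (mul_le_mul_of_nonneg_left hKle hcoef) hDD0.le
    · filter_upwards [hRb2, hlt, Real.tendsto_log_atTop.eventually_ge_atTop 1,
        eventually_ge_atTop (2:ℝ)] with R ha hab hl1 hR2
      have hR0 : (0:ℝ) < R := by linarith
      have hl0 : 0 < Real.log R := by linarith
      have hRb1 : (1:ℝ) < Rbeta β R := by linarith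
      set M := (1 - Rbeta β R ^ (-(2:ℝ))) ^ (-((p+1)/2)) with hMdef
      have hint_f : IntervalIntegrable
          (fun ρ : ℝ => ρ * (ρ ^ 2 - 1) ^ (-p / 2) * (ρ / Real.sqrt (ρ ^ 2 - 1)))
          volume (Rbeta β R) R := by
        apply ContinuousOn.intervalIntegrable
        rw [Set.uIcc_of_le hab.le]
        exact f_contOn hRb1
      have hint_hi : IntervalIntegrable (fun ρ : ℝ => M * ρ ^ ((1:ℝ) - p))
          volume (Rbeta β R) R := by
        apply IntervalIntegrable.const_mul
        apply ContinuousOn.intervalIntegrable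
        rw [Set.uIcc_of_le hab.le]
        exact pow_one_sub_contOn (by linarith)
      have hJle : (∫ ρ in (Rbeta β R)..R, ρ * (ρ ^ 2 - 1) ^ (-p / 2) * (ρ / Real.sqrt (ρ ^ 2 - 1)))
          ≤ ∫ ρ in (Rbeta β R)..R, M * ρ ^ ((1:ℝ) - p) :=
        intervalIntegral.integral_mono_on hab.le hint_f hint_hi
          (fun x hx => (f_bounds hp ha hx.1).2)
      have hKval : (∫ ρ in (Rbeta β R)..R, ρ ^ ((1:ℝ) - p))
          = (Rbeta β R ^ ((2:ℝ)-p) - R ^ ((2:ℝ)-p)) / (p-2) := by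
        rw [integral_rpow (Or.inr ⟨by linarith, by
          rw [Set.uIcc_of_le hab.le]
          intro hmem
          have := hmem.1
          linarith⟩)]
        rw [show (1:ℝ) - p + 1 = 2 - p by ring]
        rw [div_eq_div_iff (by linarith) (by linarith)]
        ring
      have hMKval : (∫ ρ in (Rbeta β R)..R, M * ρ ^ ((1:ℝ) - p))
          = M * ((Rbeta β R ^ ((2:ℝ)-p) - R ^ ((2:ℝ)-p)) / (p-2)) := by
        rw [intervalIntegral.integral_const_mul, hKval]
      have hDD0 : 0 < R ^ (-2*(1+c)) * Real.log R ^ c :=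
        mul_pos (Real.rpow_pos_of_pos hR0 _) (Real.rpow_pos_of_pos hl0 _)
      have hM0 : 0 ≤ M := le_of_lt (Real.rpow_pos_of_pos (by
        have h14 : Rbeta β R ^ (-(2:ℝ)) ≤ (2:ℝ) ^ (-(2:ℝ)) :=
          Real.rpow_le_rpow_of_nonpos (by norm_num) ha (by norm_num)
        have h2 : (2:ℝ) ^ (-(2:ℝ)) = 1/4 := by
          rw [Real.rpow_neg (by norm_num), rpow_two' (by norm_num : (0:ℝ) ≤ 2)]
          norm_num
        rw [h2] at h14
        linarith) _)
      calc 4 / (Real.pi * R ^ 2) *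
            (∫ ρ in (Rbeta β R)..R, ρ * (ρ ^ 2 - 1) ^ (-p / 2) * (ρ / Real.sqrt (ρ ^ 2 - 1)))
            / (R ^ (-2*(1+c)) * Real.log R ^ c)
          ≤ 4 / (Real.pi * R ^ 2) * (∫ ρ in (Rbeta β R)..R, M * ρ ^ ((1:ℝ) - p))
            / (R ^ (-2*(1+c)) * Real.log R ^ c) := by
            have hcoef : 0 ≤ 4 / (Real.pi * R ^ 2) := by positivity
            exact div_le_div_of_nonneg_right (mul_le_mul_of_nonneg_left hJle hcoef) hDD0.le
        _ = M * (4 / (Real.pi * R ^ 2) *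
            ((Rbeta β R ^ ((2:ℝ)-p) - R ^ ((2:ℝ)-p)) / (p-2))
            / (R ^ (-2*(1+c)) * Real.log R ^ c)) := by
            rw [hMKval]; ring
  -- final conversion to the stated form
  have hfin := hG.rpow_const (p := 1/p) (Or.inl (ne_of_gt hL))
  apply hfin.congr'
  filter_upwards [hRb2, hlt, Real.tendsto_log_atTop.eventually_ge_atTop 1,
    eventually_ge_atTop (2:ℝ)] with R ha hab hl1 hR2
  have hR0 : (0:ℝ) < R := by linarith
  have hl0 : 0 < Real.log R := by linarith
  have hRb1 : (1:ℝ) < Rbeta β R := by linarith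
  have hJ0 : 0 ≤ ∫ ρ in (Rbeta β R)..R, ρ * (ρ ^ 2 - 1) ^ (-p / 2) * (ρ / Real.sqrt (ρ ^ 2 - 1)) := by
    apply intervalIntegral.integral_nonneg hab.le
    intro x hx
    have hx1 : (1:ℝ) < x := by linarith [hx.1]
    have hlow := (f_bounds hp ha hx.1).1
    have := Real.rpow_pos_of_pos (show (0:ℝ) < x by linarith) ((1:ℝ) - p)
    linarith
  have hA0 : 0 ≤ 4 / (Real.pi * R ^ 2) *
      ∫ ρ in (Rbeta β R)..R, ρ * (ρ ^ 2 - 1) ^ (-p / 2) * (ρ / Real.sqrt (ρ ^ 2 - 1)) := by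
    apply mul_nonneg (by positivity) hJ0
  have hD0 : (0:ℝ) ≤ R ^ (-2 * (1 + c) / p) * Real.log R ^ (c / p) :=
    le_of_lt (mul_pos (Real.rpow_pos_of_pos hR0 _) (Real.rpow_pos_of_pos hl0 _))
  have hDD : R ^ (-2*(1+c)) * Real.log R ^ c
      = (R ^ (-2 * (1 + c) / p) * Real.log R ^ (c / p)) ^ p := by
    rw [Real.mul_rpow (Real.rpow_nonneg hR0.le _) (Real.rpow_nonneg hl0.le _),
      rpow_rpow hR0.le, rpow_rpow hl0.le]
    congr 1
    · congr 1
      field_simp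
    · congr 1
      field_simp
  rw [hDD, Real.div_rpow hA0 (Real.rpow_nonneg hD0 _),
    rpow_rpow hD0, mul_one_div, div_self (ne_of_gt hp0), Real.rpow_one]

end CatenoidAux
end

section
/- Let A : ℝᵐ → ℝⁿ be a linear map with operator norm at most 1, let π₀ := ℝᵐ × {0} ⊆ ℝᵐ⁺ⁿ, and let T := {(x, Ax) : x ∈ ℝᵐ} ⊆ ℝᵐ⁺ⁿ be the graph plane of A. Then the orthogonal projections P_{π₀} and P_T of ℝᵐ⁺ⁿ onto π₀ and T satisfy 2‖P_{π₀} − P_T‖² ≥ ‖A‖², where ‖·‖ denotes the Hilbert–Schmidt norm (on endomorphisms of ℝᵐ⁺ⁿ on the left and on linear maps ℝᵐ → ℝⁿ on the right). -/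
open Matrix

/-- The horizontal plane `π₀ = ℝᵐ × {0} ⊆ ℝᵐ⁺ⁿ`, as the span of the first `m`
standard basis vectors. -/
noncomputable def horizPlane (m n : ℕ) : Submodule ℝ (EuclideanSpace ℝ (Fin (m + n))) :=
  Submodule.span ℝ
    (Set.range fun i : Fin m => EuclideanSpace.single (Fin.castAdd n i) (1 : ℝ))

/-- The graph plane `T = {(x, Ax) : x ∈ ℝᵐ} ⊆ ℝᵐ⁺ⁿ` of a linear map `A : ℝᵐ → ℝⁿ`
given by a matrix, as the span of the graphs of the standard basis vectors. -/
noncomputable def graphPlane (m n : ℕ) (A : Matrix (Fin n) (Fin m) ℝ) :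
    Submodule ℝ (EuclideanSpace ℝ (Fin (m + n))) :=
  Submodule.span ℝ
    (Set.range fun i : Fin m =>
      EuclideanSpace.single (Fin.castAdd n i) (1 : ℝ) +
        ∑ j : Fin n, A j i • EuclideanSpace.single (Fin.natAdd m j) (1 : ℝ))

/-- The orthogonal projection of `ℝᵐ⁺ⁿ` onto a subspace `K`, as an endomorphism. -/
noncomputable def projOnto {m n : ℕ} (K : Submodule ℝ (EuclideanSpace ℝ (Fin (m + n)))) :
    EuclideanSpace ℝ (Fin (m + n)) →L[ℝ] EuclideanSpace ℝ (Fin (m + n)) :=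
  K.subtypeL.comp K.orthogonalProjectionOnto

/-- If `A : ℝᵐ → ℝⁿ` has operator norm at most `1`, `π₀ = ℝᵐ × {0}` and `T` is the graph
plane of `A`, then `2‖P_{π₀} − P_T‖² ≥ ‖A‖²`, where the norms are Hilbert–Schmidt norms
(computed via the standard orthonormal basis on the left, and entrywise on the right). -/
theorem tilt_controls_gradient (m n : ℕ) (A : Matrix (Fin n) (Fin m) ℝ)
    (hA : ∀ x : EuclideanSpace ℝ (Fin m), ‖Matrix.toEuclideanLin A x‖ ≤ ‖x‖) :
    2 * ∑ k : Fin (m + n),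
        ‖projOnto (horizPlane m n) (EuclideanSpace.single k 1) -
          projOnto (graphPlane m n A) (EuclideanSpace.single k 1)‖ ^ 2 ≥
      ∑ j, ∑ i, A j i ^ 2 := by
  classical
  set v : Fin m → EuclideanSpace ℝ (Fin (m + n)) := fun i =>
    EuclideanSpace.single (Fin.castAdd n i) (1 : ℝ) +
      ∑ j : Fin n, A j i • EuclideanSpace.single (Fin.natAdd m j) (1 : ℝ) with hv
  have hne : ∀ (i : Fin m) (j : Fin n), (Fin.castAdd n i : Fin (m+n)) ≠ Fin.natAdd m j := by
    intro i j h
    have := congrArg (Fin.val) h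
    simp [Fin.coe_castAdd, Fin.coe_natAdd] at this
    omega
  have hne' : ∀ (j : Fin n) (i : Fin m), (Fin.natAdd m j : Fin (m+n)) ≠ Fin.castAdd n i :=
    fun j i h => hne i j h.symm
  have hnat : ∀ (j₁ j₂ : Fin n), (Fin.natAdd m j₁ : Fin (m+n)) = Fin.natAdd m j₂ ↔ j₁ = j₂ := by
    intro j₁ j₂
    constructor
    · intro h
      have := congrArg (Fin.val) h
      simp [Fin.coe_natAdd] at this
      exact Fin.ext (by omega)
    · rintro rfl; rfl
  -- key per-column inequality
  have key : ∀ j : Fin n,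
      ∑ i, A j i ^ 2 ≤ 2 *
        ‖projOnto (horizPlane m n) (EuclideanSpace.single (Fin.natAdd m j) 1) -
          projOnto (graphPlane m n A) (EuclideanSpace.single (Fin.natAdd m j) 1)‖ ^ 2 := by
    intro j
    set e : EuclideanSpace ℝ (Fin (m + n)) := EuclideanSpace.single (Fin.natAdd m j) (1:ℝ) with he
    set a : ℝ := ∑ i, A j i ^ 2 with ha
    have ha0 : 0 ≤ a := Finset.sum_nonneg fun i _ => sq_nonneg _
    -- horizontal projection of e is zero
    have heH : e ∈ (horizPlane m n)ᗮ := by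
      rw [Submodule.mem_orthogonal]
      intro x hx
      induction hx using Submodule.span_induction with
      | mem x hx =>
        obtain ⟨i, rfl⟩ := hx
        simp [he, EuclideanSpace.inner_single_left, EuclideanSpace.single_apply, hne' j i]
      | zero => simp
      | add x y _ _ hx hy => rw [inner_add_left, hx, hy, add_zero]
      | smul c x _ hx => rw [inner_smul_left, hx, mul_zero]
    have hPe : projOnto (horizPlane m n) e = 0 := by
      simp [projOnto, Submodule.orthogonalProjectionOnto_apply_of_mem_orthogonal heH]
    set w : EuclideanSpace ℝ (Fin (m + n)) := projOnto (graphPlane m n A) e with hwdef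
    set u : EuclideanSpace ℝ (Fin (m + n)) := ∑ i : Fin m, A j i • v i with hu
    have huK : u ∈ graphPlane m n A :=
      Submodule.sum_mem _ fun i _ =>
        Submodule.smul_mem _ _ (Submodule.subset_span ⟨i, rfl⟩)
    -- coordinates of v i
    have hsv1 : ∀ (i' i : Fin m),
        (inner ℝ (EuclideanSpace.single (Fin.castAdd n i') (1:ℝ)) (v i) : ℝ)
          = if i' = i then 1 else 0 := by
      intro i' i
      simp only [hv, inner_add_right, inner_sum, real_inner_smul_right,
        EuclideanSpace.inner_single_left, _root_.map_one, one_mul, EuclideanSpace.single_apply]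
      rw [Finset.sum_eq_zero (fun j' _ => by simp [hne i' j'])]
      simp [Fin.castAdd_inj]
    have hsv2 : ∀ (j' : Fin n) (i : Fin m),
        (inner ℝ (EuclideanSpace.single (Fin.natAdd m j') (1:ℝ)) (v i) : ℝ) = A j' i := by
      intro j' i
      simp only [hv, inner_add_right, inner_sum, real_inner_smul_right,
        EuclideanSpace.inner_single_left, _root_.map_one, one_mul, EuclideanSpace.single_apply]
      simp [hne' j' , hnat, Finset.sum_ite_eq]
    -- inner of e with u
    have heu : (inner ℝ e u : ℝ) = a := by
      rw [hu, inner_sum]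
      simp only [real_inner_smul_right, he, hsv2]
      simp [ha, sq]
    -- ⟪w, u⟫ = a
    have hwu : (inner ℝ w u : ℝ) = a := by
      have hsub : e - w ∈ (graphPlane m n A)ᗮ := by
        have := Submodule.sub_starProjection_mem_orthogonal (K := graphPlane m n A) e
        rw [Submodule.starProjection_apply] at this
        exact this
      have h0 : (inner ℝ u (e - w) : ℝ) = 0 :=
        Submodule.inner_right_of_mem_orthogonal huK hsub
      rw [inner_sub_right] at h0
      have : (inner ℝ u w : ℝ) = inner ℝ u e := by linarith
      rw [real_inner_comm, this, real_inner_comm, heu]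
    -- coordinates of u
    have hcu1 : ∀ i : Fin m, u (Fin.castAdd n i) = A j i := by
      intro i
      have h := EuclideanSpace.inner_single_left (𝕜 := ℝ) (Fin.castAdd n i) 1 u
      rw [_root_.map_one, one_mul] at h
      rw [← h, hu, inner_sum]
      simp only [real_inner_smul_right, hsv1]
      simp
    have hcu2 : ∀ j' : Fin n, u (Fin.natAdd m j') = ∑ i, A j' i * A j i := by
      intro j'
      have h := EuclideanSpace.inner_single_left (𝕜 := ℝ) (Fin.natAdd m j') 1 u
      rw [_root_.map_one, one_mul] at h
      rw [← h, hu, inner_sum]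
      simp only [real_inner_smul_right, hsv2]
      simp [mul_comm]
    -- norm of u squared
    have hnormsq : ∀ x : EuclideanSpace ℝ (Fin (m+n)), ‖x‖^2 = ∑ k, (x k)^2 := by
      intro x
      rw [EuclideanSpace.norm_eq, Real.sq_sqrt (by positivity)]
      simp [Real.norm_eq_abs, sq_abs]
    have hAx : ∑ j' : Fin n, (∑ i, A j' i * A j i)^2 ≤ a := by
      set x : EuclideanSpace ℝ (Fin m) := (WithLp.equiv 2 (Fin m → ℝ)).symm (fun i => A j i)
        with hx
      have hxnorm : ‖x‖^2 = a := by
        rw [EuclideanSpace.norm_eq, Real.sq_sqrt (by positivity)]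
        simp [hx, ha, Real.norm_eq_abs, sq_abs]
      have hAxnorm : ‖Matrix.toEuclideanLin A x‖^2 = ∑ j' : Fin n, (∑ i, A j' i * A j i)^2 := by
        rw [EuclideanSpace.norm_eq, Real.sq_sqrt (by positivity)]
        simp [Matrix.toEuclideanLin_apply, hx, Matrix.mulVec, dotProduct,
          Real.norm_eq_abs, sq_abs]
      have := hA x
      nlinarith [norm_nonneg (Matrix.toEuclideanLin A x), norm_nonneg x]
    have hun : ‖u‖^2 ≤ 2 * a := by
      rw [hnormsq u, Fin.sum_univ_add]
      simp only [hcu1, hcu2]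
      have : ∑ i : Fin m, A j i ^ 2 = a := ha.symm
      linarith [hAx]
    -- Cauchy-Schwarz
    have hcs : a ≤ ‖w‖ * ‖u‖ := by
      rw [← hwu]; exact real_inner_le_norm w u
    -- conclude
    have hgoal : a ≤ 2 * ‖w‖ ^ 2 := by
      rcases eq_or_lt_of_le ha0 with h0 | h0
      · nlinarith [sq_nonneg ‖w‖]
      · nlinarith [mul_le_mul hcs hcs ha0 (le_trans ha0 hcs), norm_nonneg w, norm_nonneg u,
          mul_le_mul_of_nonneg_left hun (sq_nonneg ‖w‖)]
    calc a ≤ 2 * ‖w‖ ^ 2 := hgoal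
      _ = 2 * ‖projOnto (horizPlane m n) e - projOnto (graphPlane m n A) e‖ ^ 2 := by
          rw [hPe, zero_sub, norm_neg]
  -- assemble
  rw [ge_iff_le]
  set F : Fin (m + n) → ℝ := fun k =>
    ‖projOnto (horizPlane m n) (EuclideanSpace.single k 1) -
      projOnto (graphPlane m n A) (EuclideanSpace.single k 1)‖ ^ 2 with hF
  calc ∑ j, ∑ i, A j i ^ 2 ≤ ∑ j : Fin n, 2 * F (Fin.natAdd m j) :=
        Finset.sum_le_sum fun j _ => key j
    _ = 2 * ∑ j : Fin n, F (Fin.natAdd m j) := by rw [Finset.mul_sum]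
    _ ≤ 2 * ∑ k : Fin (m + n), F k := by
        rw [Fin.sum_univ_add (f := F)]
        have h1 : 0 ≤ ∑ i : Fin m, F (Fin.castAdd n i) :=
          Finset.sum_nonneg fun i _ => by positivity
        linarith
end
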